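/- For every ν ≥ 0 the Wronskian d_ν = Wr[h_ν, h_{ν+1}] satisfies the differential equation d_ν'' − (2x + 2 h_ν'/h_ν) d_ν' + 4x (h_ν'/h_ν) d_ν = 0, i.e. h_ν d_ν'' − (2x h_ν + 2 h_ν') d_ν' + 4x h_ν' d_ν = 0 as polynomial identity. -/

import Mathlib

open Polynomial

theorem derivative_hermite'' (n : ℕ) :
    derivative (hermite n) = X * hermite n - hermite (n + 1) := by
  rw [hermite_succ]; ring

theorem derivative_hermite' (n : ℕ) :
    derivative (hermite (n + 1)) = C ((n : ℤ) + 1) * hermite n := by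
  induction n with
  | zero => simp [hermite_one, hermite_zero]
  | succ n ih =>
    rw [hermite_succ (n + 1), derivative_sub, derivative_mul, derivative_X, ih,
      derivative_mul, derivative_C, derivative_hermite'' n]
    push_cast [map_add, map_one]
    ring

theorem hermite_ode (n : ℕ) :
    derivative (derivative (hermite n)) =
      X * derivative (hermite n) - C (n : ℤ) * hermite n := by
  cases n with
  | zero => simp
  | succ n =>
    rw [derivative_hermite' n, derivative_mul, derivative_C,
      derivative_hermite'' n]
    push_cast [map_add, map_one]
    ring

/-- The orthonormal Hermite polynomial of degree `n` with respect to the weight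
`exp (-x^2)` on `ℝ`: `h n = (2^n * n! * √π)^(-1/2) * H_n`, where `H_n` is the
physicists' Hermite polynomial, obtained from the probabilists' Hermite polynomial
`He_n` (Mathlib's `Polynomial.hermite`) by `H_n x = (√2)^n * He_n (√2 * x)`. -/
noncomputable def orthonormalHermite (n : ℕ) : Polynomial ℝ :=
  Polynomial.C ((Real.sqrt ((2 : ℝ) ^ n * (n.factorial : ℝ) * Real.sqrt Real.pi))⁻¹
      * (Real.sqrt 2) ^ n) *
    ((Polynomial.hermite n).map (Int.castRingHom ℝ)).comp
      (Polynomial.C (Real.sqrt 2) * Polynomial.X)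

theorem orthonormalHermite_ode (n : ℕ) :
    derivative (derivative (orthonormalHermite n)) =
      2 * X * derivative (orthonormalHermite n) - C (2 * (n : ℝ)) * orthonormalHermite n := by
  set s := Real.sqrt 2 with hs
  have hs2 : C s * C s = (2 : ℝ[X]) := by
    rw [← C_mul, Real.mul_self_sqrt (by norm_num)]; exact map_ofNat C 2
  set q0 : ℝ[X] := ((hermite n).map (Int.castRingHom ℝ)).comp (C s * X) with hq0
  set q1 : ℝ[X] := ((derivative (hermite n)).map (Int.castRingHom ℝ)).comp (C s * X) with hq1
  set q2 : ℝ[X] := ((derivative (derivative (hermite n))).map (Int.castRingHom ℝ)).comp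
      (C s * X) with hq2
  have d0 : derivative q0 = C s * q1 := by
    rw [hq0, derivative_comp, derivative_map]
    simp [hq1]
  have d1 : derivative q1 = C s * q2 := by
    rw [hq1, derivative_comp, derivative_map]
    simp [hq2]
  have key : q2 = C s * X * q1 - C (n : ℝ) * q0 := by
    rw [hq2, hermite_ode n]
    simp only [Polynomial.map_sub, Polynomial.map_mul, Polynomial.map_X, map_intCast, sub_comp,
      mul_comp, X_comp, C_comp, hq1, hq0]
    simp [Polynomial.map_C]
  have hC : ((n : ℤ) : ℝ[X]) = C (n : ℝ) := by push_cast; simp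
  rw [orthonormalHermite]
  simp only [← hs, ← hq0, derivative_mul, derivative_C, zero_mul, zero_add, d0, d1]
  rw [key, show C (2 * (n:ℝ)) = 2 * C (n:ℝ) by rw [map_mul, map_ofNat]]
  linear_combination (C ((Real.sqrt ((2:ℝ) ^ n * (n.factorial : ℝ) * Real.sqrt Real.pi))⁻¹ *
      s ^ n) * (C s * X * q1 - C (n:ℝ) * q0)) * hs2

/-- The Wronskian `d_ν = h_ν h_{ν+1}' − h_ν' h_{ν+1}` of consecutive orthonormal
Hermite polynomials. -/
noncomputable def hermiteWronskian (ν : ℕ) : Polynomial ℝ :=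
  orthonormalHermite ν * (orthonormalHermite (ν + 1)).derivative -
    (orthonormalHermite ν).derivative * orthonormalHermite (ν + 1)

/-- The Wronskian `d_ν = Wr[h_ν, h_{ν+1}]` satisfies
`d_ν'' − (2x + 2 h_ν'/h_ν) d_ν' + 4x (h_ν'/h_ν) d_ν = 0`, in the polynomial form
`h_ν d_ν'' − (2x h_ν + 2 h_ν') d_ν' + 4x h_ν' d_ν = 0`. -/
theorem hermiteWronskian_ode (ν : ℕ) :
    orthonormalHermite ν * ((hermiteWronskian ν).derivative).derivative -
        (2 * Polynomial.X * orthonormalHermite ν + 2 * (orthonormalHermite ν).derivative) *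
          (hermiteWronskian ν).derivative +
        4 * Polynomial.X * (orthonormalHermite ν).derivative * hermiteWronskian ν = 0 := by
  have hh := orthonormalHermite_ode ν
  have hg := orthonormalHermite_ode (ν + 1)
  have e : C (2 * ((ν + 1 : ℕ) : ℝ)) = C (2 * (ν : ℝ)) + 2 := by
    push_cast
    rw [mul_add, mul_one, map_add, map_ofNat]
  rw [e] at hg
  simp only [hermiteWronskian, derivative_sub, derivative_mul, derivative_add, hh, hg,
    derivative_X, derivative_C, derivative_ofNat, mul_one, zero_mul, add_zero, zero_add, mul_zero]
  ring
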